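/- arXiv:2307.06851 — 2 statements merged into one kernel-verified Lean document; each statement's English description precedes it below -/
import Mathlib

section
/- Let s and s' be simulators in a target–context category and let (r*,q*) : s → s' be a simulator morphism. Then r* is a lax reduction of type s → s', i.e. s∘(r⊗id_{C₀}) ⪰ s'. Consequently, if s' is a universal simulator then s is a universal simulator (simulator morphisms cannot generate universality). -/
open CategoryTheory MonoidalCategory

universe w v u v' u'

/-- A gs-monoidal category: a symmetric monoidal category in which every object carries a
commutative comonoid structure (copy and discard), compatible with tensor products. -/
class GSCat (C : Type u) [Category.{v} C] [MonoidalCategory C] [SymmetricCategory C] where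
  copy : ∀ A : C, A ⟶ A ⊗ A
  discard : ∀ A : C, A ⟶ 𝟙_ C
  copy_assoc : ∀ A : C, copy A ≫ (copy A ▷ A) ≫ (α_ A A A).hom = copy A ≫ (A ◁ copy A)
  copy_comm : ∀ A : C, copy A ≫ (β_ A A).hom = copy A
  copy_counit_left : ∀ A : C, copy A ≫ (discard A ▷ A) ≫ (λ_ A).hom = 𝟙 A
  copy_counit_right : ∀ A : C, copy A ≫ (A ◁ discard A) ≫ (ρ_ A).hom = 𝟙 A
  copy_tensor : ∀ A X : C, copy (A ⊗ X) = (copy A ⊗ₘ copy X) ≫ tensorμ A A X X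
  discard_tensor : ∀ A X : C, discard (A ⊗ X) = (discard A ⊗ₘ discard X) ≫ (λ_ (𝟙_ C)).hom
  discard_unit : discard (𝟙_ C) = 𝟙 (𝟙_ C)

variable {C : Type u} [Category.{v} C] [MonoidalCategory C] [SymmetricCategory C] [GSCat C]

/-- The domain `dom(f) = ρ_A ∘ (id_A ⊗ (ε_X ∘ f)) ∘ Δ_A` of a morphism `f : A ⟶ X`. -/
def gsDom {A X : C} (f : A ⟶ X) : A ⟶ A :=
  GSCat.copy A ≫ (A ◁ (f ≫ GSCat.discard X)) ≫ (ρ_ A).hom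

/-- A morphism is normalized if `f ∘ dom(f) = f`. -/
def GsNormalized {A X : C} (f : A ⟶ X) : Prop := gsDom f ≫ f = f

/-- A morphism is functional if `Δ_X ∘ f = (f ⊗ f) ∘ Δ_A`. -/
def GsFunctional {A X : C} (f : A ⟶ X) : Prop :=
  f ≫ GSCat.copy X = GSCat.copy A ≫ (f ⊗ₘ f)

/-- A morphism is total if `ε_X ∘ f = ε_A`. -/
def GsTotal {A X : C} (f : A ⟶ X) : Prop := f ≫ GSCat.discard X = GSCat.discard A

/-- `f ⊒ g` : `f` agrees with `g` on the domain of `g`, i.e. `f ∘ dom(g) = g`. -/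
def GsRestrict {A X : C} (f g : A ⟶ X) : Prop := gsDom g ≫ f = g

/-- A gs-monoidal category is normalized if all of its morphisms are normalized. -/
class GsNormalizedCat (C : Type u) [Category.{v} C] [MonoidalCategory C]
    [SymmetricCategory C] [GSCat C] : Prop where
  norm : ∀ {A X : C} (f : A ⟶ X), GsNormalized f

/-- A target--context category: a (normalized) gs-monoidal category with distinguished
objects `T` (targets) and `C0` (contexts) together with an ambient preorder on each
hom-set into `T ⊗ C0`, containing the restriction order and preserved by precomposition. -/
structure TCC (C : Type u) [Category.{v} C] [MonoidalCategory C] [SymmetricCategory C]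
    [GSCat C] (T C0 : C) where
  amb : ∀ {A : C}, (A ⟶ T ⊗ C0) → (A ⟶ T ⊗ C0) → Prop
  amb_refl : ∀ {A : C} (f : A ⟶ T ⊗ C0), amb f f
  amb_trans : ∀ {A : C} {f g h : A ⟶ T ⊗ C0}, amb f g → amb g h → amb f h
  amb_of_restrict : ∀ {A : C} {f g : A ⟶ T ⊗ C0}, GsRestrict f g → amb f g
  amb_precomp : ∀ {A Z : C} {f g : A ⟶ T ⊗ C0} (h : Z ⟶ A), amb f g → amb (h ≫ f) (h ≫ g)

/-- A simulator: a morphism `s : P ⊗ C0 ⟶ T ⊗ C0` of the form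
`s = (s_T ⊗ s_C) ∘ (Δ_P ⊗ id)` with functional compiler `s_T : P ⟶ T` and
context reduction `s_C : P ⊗ C0 ⟶ C0`. -/
structure Simulator {C : Type u} [Category.{v} C] [MonoidalCategory C] [SymmetricCategory C]
    [GSCat C] (T C0 P : C) where
  s : P ⊗ C0 ⟶ T ⊗ C0
  sT : P ⟶ T
  sC : P ⊗ C0 ⟶ C0
  sT_functional : GsFunctional sT
  split : s = (GSCat.copy P ▷ C0) ≫ (α_ P P C0).hom ≫ (sT ⊗ₘ sC)

/-- A simulator is universal if there is a lax reduction to the trivial simulator: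
a functional `r : T ⟶ P` with `s ∘ (r ⊗ id) ⪰ id`. -/
def IsUniversal {T C0 : C} (𝒯 : TCC C T C0) {P : C} (s : Simulator T C0 P) : Prop :=
  ∃ r : T ⟶ P, GsFunctional r ∧ 𝒯.amb ((r ▷ C0) ≫ s.s) (𝟙 (T ⊗ C0))

/-- A processing with programs `P`: a morphism `q : P ⊗ (T ⊗ C0) ⟶ T ⊗ C0` that splits as a
simulator with programs `P ⊗ T` and is behaviorally dominated by discarding `P`. -/
structure Processing {T C0 : C} (𝒯 : TCC C T C0) (P : C) where
  q : P ⊗ (T ⊗ C0) ⟶ T ⊗ C0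
  qT : P ⊗ T ⟶ T
  qC : (P ⊗ T) ⊗ C0 ⟶ C0
  qT_functional : GsFunctional qT
  split : q = (α_ P T C0).inv ≫ (GSCat.copy (P ⊗ T) ▷ C0) ≫
      (α_ (P ⊗ T) (P ⊗ T) C0).hom ≫ (qT ⊗ₘ qC)
  weak : 𝒯.amb ((GSCat.discard P ▷ (T ⊗ C0)) ≫ (λ_ (T ⊗ C0)).hom) q

/-- A simulator morphism `s → s'` : a reduction `r : P' ⟶ P` (giving the pulled-back
simulator `r*s := s ∘ (r ⊗ id)`) together with a processing `q` mapping `r*s` to `s'`,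
i.e. `s' = q ∘ (id ⊗ r*s) ∘ (Δ ⊗ id)`. -/
structure SimMor {T C0 : C} (𝒯 : TCC C T C0) {P P' : C}
    (s : Simulator T C0 P) (s' : Simulator T C0 P') where
  r : P' ⟶ P
  r_functional : GsFunctional r
  proc : Processing 𝒯 P'
  hit : (GSCat.copy P' ▷ C0) ≫ (α_ P' P' C0).hom ≫
      (P' ◁ ((r ▷ C0) ≫ s.s)) ≫ proc.q = s'.s

lemma gs_key {A B X : C} (f : A ⊗ B ⟶ X) :
    (GSCat.copy A ▷ B) ≫ (α_ A A B).hom ≫ (A ◁ f) ≫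
      (GSCat.discard A ▷ X) ≫ (λ_ X).hom = f := by
  have h1 : (A ◁ f) ≫ (GSCat.discard A ▷ X) =
      (GSCat.discard A ▷ (A ⊗ B)) ≫ ((𝟙_ C) ◁ f) :=
    whisker_exchange (GSCat.discard A) f
  rw [reassoc_of% h1, MonoidalCategory.leftUnitor_naturality,
    ← MonoidalCategory.associator_naturality_left_assoc]
  simp only [MonoidalCategory.leftUnitor_tensor_hom, Category.assoc, Iso.hom_inv_id_assoc,
    ← MonoidalCategory.comp_whiskerRight_assoc, ← MonoidalCategory.comp_whiskerRight]
  rw [GSCat.copy_counit_left]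
  simp

lemma gsFunctional_comp {A B D : C} {f : A ⟶ B} {g : B ⟶ D}
    (hf : GsFunctional f) (hg : GsFunctional g) : GsFunctional (f ≫ g) := by
  unfold GsFunctional at *
  rw [Category.assoc, hg, reassoc_of% hf, MonoidalCategory.tensorHom_comp_tensorHom]

/-- The reduction part of a simulator morphism is a lax reduction, i.e.
`s ∘ (r ⊗ id) ⪰ s'`; consequently simulator morphisms cannot generate universality. -/
theorem simMor_gives_lax_reduction {T C0 : C} (𝒯 : TCC C T C0) {P P' : C}
    (s : Simulator T C0 P) (s' : Simulator T C0 P') (m : SimMor 𝒯 s s') :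
    𝒯.amb ((m.r ▷ C0) ≫ s.s) s'.s ∧ (IsUniversal 𝒯 s' → IsUniversal 𝒯 s) := by
  have main : 𝒯.amb ((m.r ▷ C0) ≫ s.s) s'.s := by
    have h := 𝒯.amb_precomp ((GSCat.copy P' ▷ C0) ≫ (α_ P' P' C0).hom ≫
      (P' ◁ ((m.r ▷ C0) ≫ s.s))) m.proc.weak
    have e : ((GSCat.copy P' ▷ C0) ≫ (α_ P' P' C0).hom ≫
        (P' ◁ ((m.r ▷ C0) ≫ s.s))) ≫
        ((GSCat.discard P' ▷ (T ⊗ C0)) ≫ (λ_ (T ⊗ C0)).hom) =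
        (m.r ▷ C0) ≫ s.s := by
      simpa using gs_key ((m.r ▷ C0) ≫ s.s)
    have e2 : ((GSCat.copy P' ▷ C0) ≫ (α_ P' P' C0).hom ≫
        (P' ◁ ((m.r ▷ C0) ≫ s.s))) ≫ m.proc.q = s'.s := by
      simpa using m.hit
    rw [e, e2] at h
    exact h
  refine ⟨main, ?_⟩
  rintro ⟨r', hr'f, hr'⟩
  refine ⟨r' ≫ m.r, gsFunctional_comp hr'f m.r_functional, ?_⟩
  have h2 := 𝒯.amb_precomp (r' ▷ C0) main
  rw [← Category.assoc, ← MonoidalCategory.comp_whiskerRight] at h2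
  exact 𝒯.amb_trans h2 hr'
end

section
/- (Total fixed points.) Let C be a target–context category with intrinsic behaviors, with evaluation morphism eval : T⊗C₀ → B. Suppose F : C₀⊗C₀ → B is total, and F is an A-complete parametrization (for some A) by total morphisms, i.e. for every f : A⊗C₀ → B there exists a functional and total c_f : A → C₀ with Beh(F∘(c_f⊗id_{C₀})) ⪰^im Beh(f). Then every morphism g : B → B has a total quasi-fixed point b : A → B. -/
open CategoryTheory MonoidalCategory

universe w v u v' u'

variable {C : Type u} [Category.{v} C] [MonoidalCategory C] [SymmetricCategory C] [GSCat C]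

/-- Composition of set-valued relations (first `f`, then `g`). -/
def RComp {α β γ : Type*} (f : α → Set β) (g : β → Set γ) : α → Set γ :=
  fun a => {c | ∃ b ∈ f a, c ∈ g b}

/-- Existence of an enhancement map `U → V` with respect to `pre`
(read `pre x y` as "`x ⪰ y`"): a map sending each `u ∈ U` to an element of `V` above it. -/
def IsEnh {X : Type w} (pre : X → X → Prop) (U V : Set X) : Prop :=
  ∃ e : U → V, ∀ u : U, pre (e u : X) (u : X)

/-- Existence of a degradation map `V → U`: a map sending each `v ∈ V` to an element of `U`
below it. -/
def IsDeg {X : Type w} (pre : X → X → Prop) (U V : Set X) : Prop :=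
  ∃ d : V → U, ∀ v : V, pre (v : X) (d v : X)

/-- The imitation relation: `ν` imitates `μ` iff for every `a` in the domain of `μ` there are
an enhancement map `μ a → ν a` and a degradation map `ν a → μ a`. -/
def Imitates {α : Type*} {X : Type w} (pre : X → X → Prop) (ν μ : α → Set X) : Prop :=
  ∀ a : α, (μ a).Nonempty → IsEnh pre (μ a) (ν a) ∧ IsDeg pre (μ a) (ν a)

/-- A target--context category with intrinsic behaviors: a behavior structure (a lax
gs-monoidal functor to `Rel`, encoded concretely) for which the evaluation is the shadow
of a morphism `eval : T ⊗ C0 ⟶ B` of the ambient category, i.e. `Beh(eval)` is the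
(graph of the) function `evalHat`, together with a preorder `brel` on `Beh(B)`. -/
structure IntrinsicBS (C : Type u) [Category.{v} C] [MonoidalCategory C]
    [SymmetricCategory C] [GSCat C] (T C0 B : C) where
  obj : C → Type w
  map : ∀ {A X : C}, (A ⟶ X) → obj A → Set (obj X)
  map_id : ∀ {A : C} (a : obj A), map (𝟙 A) a = {a}
  map_comp : ∀ {A X Y : C} (f : A ⟶ X) (g : X ⟶ Y) (a : obj A),
    map (f ≫ g) a = {y | ∃ x ∈ map f a, y ∈ map g x}
  unitSet : Set (obj (𝟙_ C))
  mul : ∀ A X : C, obj A → obj X → Set (obj (A ⊗ X))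
  mul_natural : ∀ {A A' X X' : C} (f : A ⟶ A') (g : X ⟶ X')
      (a : obj A) (x : obj X) (y : obj (A' ⊗ X')),
    (∃ a' ∈ map f a, ∃ x' ∈ map g x, y ∈ mul A' X' a' x') ↔
      ∃ z ∈ mul A X a x, y ∈ map (f ⊗ₘ g) z
  mul_assoc : ∀ {A X Y : C} (a : obj A) (x : obj X) (y : obj Y) (u : obj (A ⊗ (X ⊗ Y))),
    (∃ z ∈ mul A X a x, ∃ v ∈ mul (A ⊗ X) Y z y, u ∈ map (α_ A X Y).hom v) ↔
      ∃ t ∈ mul X Y x y, u ∈ mul A (X ⊗ Y) a t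
  mul_left_unit : ∀ {A : C} (a b : obj A),
    (∃ i ∈ unitSet, ∃ z ∈ mul (𝟙_ C) A i a, b ∈ map (λ_ A).hom z) ↔ b = a
  mul_right_unit : ∀ {A : C} (a b : obj A),
    (∃ i ∈ unitSet, ∃ z ∈ mul A (𝟙_ C) a i, b ∈ map (ρ_ A).hom z) ↔ b = a
  mul_braiding : ∀ {A X : C} (a : obj A) (x : obj X) (u : obj (X ⊗ A)),
    (∃ z ∈ mul A X a x, u ∈ map (β_ A X).hom z) ↔ u ∈ mul X A x a
  map_copy : ∀ {A : C} (a : obj A), map (GSCat.copy A) a = mul A A a a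
  map_discard : ∀ {A : C} (a : obj A), map (GSCat.discard A) a = unitSet
  eval : T ⊗ C0 ⟶ B
  evalHat : obj (T ⊗ C0) → obj B
  eval_beh : ∀ x : obj (T ⊗ C0), map eval x = {evalHat x}
  brel : obj B → obj B → Prop
  brel_refl : ∀ b : obj B, brel b b
  brel_trans : ∀ {b₁ b₂ b₃ : obj B}, brel b₁ b₂ → brel b₂ b₃ → brel b₁ b₃

/-- The ambient imitation relation induced by an intrinsic behavior structure. -/
def IntrinsicBS.aim {T C0 B : C} (β : IntrinsicBS C T C0 B) {A : C}
    (f g : A ⟶ T ⊗ C0) : Prop :=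
  Imitates β.brel (fun a => β.evalHat '' β.map f a) (fun a => β.evalHat '' β.map g a)

/-- `F : P ⊗ C0 ⟶ B` is an `A`-complete parametrization of maps `C0 → B` if every
`f : A ⊗ C0 ⟶ B` is parametrized, up to imitation, by a functional `p : A ⟶ P`. -/
def IntrinsicBS.IsCompleteParam {T C0 B : C} (β : IntrinsicBS C T C0 B) (A P : C)
    (F : P ⊗ C0 ⟶ B) : Prop :=
  ∀ f : A ⊗ C0 ⟶ B, ∃ p : A ⟶ P, GsFunctional p ∧
    Imitates β.brel (β.map ((p ▷ C0) ≫ F)) (β.map f)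

/-- `b : A ⟶ B` is a quasi-fixed point of `g : B ⟶ B` if `Beh(b) ⪰ᵢₘ Beh(g ∘ b)`. -/
def IntrinsicBS.QuasiFixed {T C0 B : C} (β : IntrinsicBS C T C0 B) {A : C}
    (b : A ⟶ B) (g : B ⟶ B) : Prop :=
  Imitates β.brel (β.map b) (β.map (b ≫ g))

section TFPAux

open MonoidalCategory GSCat

/-- Discarding one tensor factor (left projection) is total. -/
theorem projL_total (A X : C) :
    GsTotal ((GSCat.discard A ▷ X) ≫ (λ_ X).hom) := by
  show ((GSCat.discard A ▷ X) ≫ (λ_ X).hom) ≫ GSCat.discard X = GSCat.discard (A ⊗ X)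
  rw [GSCat.discard_tensor, MonoidalCategory.tensorHom_def]
  simp only [Category.assoc, MonoidalCategory.leftUnitor_naturality]

/-- Discarding one tensor factor (right projection) is total. -/
theorem projR_total (A X : C) :
    GsTotal ((A ◁ GSCat.discard X) ≫ (ρ_ A).hom) := by
  show ((A ◁ GSCat.discard X) ≫ (ρ_ A).hom) ≫ GSCat.discard A = GSCat.discard (A ⊗ X)
  rw [GSCat.discard_tensor, tensorHom_def', unitors_equal]
  simp only [Category.assoc, MonoidalCategory.rightUnitor_naturality]

/-- Copy followed by discarding everything is discard. -/
theorem copy_discard (A : C) :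
    GSCat.copy A ≫ GSCat.discard (A ⊗ A) = GSCat.discard A := by
  rw [GSCat.discard_tensor, MonoidalCategory.tensorHom_def]
  calc GSCat.copy A ≫ (GSCat.discard A ▷ A ≫ 𝟙_ C ◁ GSCat.discard A) ≫ (λ_ (𝟙_ C)).hom
      = (GSCat.copy A ≫ GSCat.discard A ▷ A ≫ (λ_ A).hom) ≫ GSCat.discard A := by
        simp only [Category.assoc, MonoidalCategory.leftUnitor_naturality]
    _ = GSCat.discard A := by rw [GSCat.copy_counit_left]; simp

variable {T C0 B : C} (β : IntrinsicBS C T C0 B)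

theorem mem_map_comp {A X Y : C} (f : A ⟶ X) (g : X ⟶ Y) (a : β.obj A) (y : β.obj Y) :
    y ∈ β.map (f ≫ g) a ↔ ∃ x ∈ β.map f a, y ∈ β.map g x := by
  rw [β.map_comp]; rfl

theorem unit_nonempty {A : C} (a : β.obj A) : β.unitSet.Nonempty := by
  obtain ⟨i, hi, -⟩ := (β.mul_right_unit a a).mpr rfl
  exact ⟨i, hi⟩

theorem total_beh {A X : C} {h : A ⟶ X} (ht : GsTotal h) (a : β.obj A) :
    (β.map h a).Nonempty := by
  have ht' : h ≫ GSCat.discard X = GSCat.discard A := ht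
  obtain ⟨i, hi⟩ := unit_nonempty β a
  have hmem : i ∈ β.map (h ≫ GSCat.discard X) a := by
    rw [ht', β.map_discard]; exact hi
  rw [mem_map_comp] at hmem
  obtain ⟨x, hx, -⟩ := hmem
  exact ⟨x, hx⟩

theorem mul_nonempty {A X : C} (a : β.obj A) (x : β.obj X) :
    (β.mul A X a x).Nonempty := by
  obtain ⟨i, hi, z, hz, -⟩ := (β.mul_left_unit x x).mpr rfl
  obtain ⟨w, hw, -⟩ := (β.mul_natural (GSCat.discard A) (𝟙 X) a x z).mp
    ⟨i, by rw [β.map_discard]; exact hi, x, by rw [β.map_id]; rfl, hz⟩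
  exact ⟨w, hw⟩

theorem projL_mem {A X : C} {a : β.obj A} {x : β.obj X} {z : β.obj (A ⊗ X)}
    (hz : z ∈ β.mul A X a x) {w : β.obj X}
    (hw : w ∈ β.map ((GSCat.discard A ▷ X) ≫ (λ_ X).hom) z) : w = x := by
  rw [mem_map_comp] at hw
  obtain ⟨y, hy, hwy⟩ := hw
  rw [← tensorHom_id] at hy
  obtain ⟨i, hi, x', hx', hyx⟩ := (β.mul_natural (GSCat.discard A) (𝟙 X) a x y).mpr ⟨z, hz, hy⟩
  rw [β.map_discard] at hi
  rw [β.map_id] at hx'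
  have hx'' : x' = x := hx'
  subst hx''
  exact (β.mul_left_unit x' w).mp ⟨i, hi, y, hyx, hwy⟩

theorem projR_mem {A X : C} {a : β.obj A} {x : β.obj X} {z : β.obj (A ⊗ X)}
    (hz : z ∈ β.mul A X a x) {w : β.obj A}
    (hw : w ∈ β.map ((A ◁ GSCat.discard X) ≫ (ρ_ A).hom) z) : w = a := by
  rw [mem_map_comp] at hw
  obtain ⟨y, hy, hwy⟩ := hw
  rw [← id_tensorHom] at hy
  obtain ⟨a', ha', i, hi, hya⟩ := (β.mul_natural (𝟙 A) (GSCat.discard X) a x y).mpr ⟨z, hz, hy⟩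
  rw [β.map_discard] at hi
  rw [β.map_id] at ha'
  have ha'' : a' = a := ha'
  subst ha''
  exact (β.mul_right_unit a' w).mp ⟨i, hi, y, hya, hwy⟩

/-- Elements of `mul A X a x` determine both coordinates. -/
theorem mul_determines {A X : C} {a a' : β.obj A} {x x' : β.obj X} {z : β.obj (A ⊗ X)}
    (h : z ∈ β.mul A X a x) (h' : z ∈ β.mul A X a' x') : a = a' ∧ x = x' := by
  constructor
  · obtain ⟨w, hw⟩ := total_beh β (projR_total A X) z
    exact (projR_mem β h hw).symm.trans (projR_mem β h' hw)
  · obtain ⟨w, hw⟩ := total_beh β (projL_total A X) z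
    exact (projL_mem β h hw).symm.trans (projL_mem β h' hw)

/-- A functional and total morphism has singleton behavior sets. -/
theorem functional_total_singleton {A X : C} {c : A ⟶ X}
    (hcf : GsFunctional c) (hct : GsTotal c) (a : β.obj A) :
    ∃ x₀ : β.obj X, β.map c a = {x₀} := by
  have hcf' : c ≫ GSCat.copy X = GSCat.copy A ≫ (c ⊗ₘ c) := hcf
  obtain ⟨x₀, hx₀⟩ := total_beh β hct a
  refine ⟨x₀, Set.eq_singleton_iff_unique_mem.mpr ⟨hx₀, ?_⟩⟩
  intro x₁ h₁
  obtain ⟨q, hq⟩ := mul_nonempty β x₀ x₁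
  obtain ⟨z, hz, hqz⟩ := (β.mul_natural c c a a q).mp ⟨x₀, hx₀, x₁, h₁, hq⟩
  have hmem : q ∈ β.map (GSCat.copy A ≫ (c ⊗ₘ c)) a := by
    rw [mem_map_comp]
    exact ⟨z, by rw [β.map_copy]; exact hz, hqz⟩
  rw [← hcf', mem_map_comp] at hmem
  obtain ⟨x₂, hx₂, hq₂⟩ := hmem
  rw [β.map_copy] at hq₂
  obtain ⟨e₁, e₂⟩ := mul_determines β hq hq₂
  exact e₂.trans e₁.symm

end TFPAux

/-- Total fixed points: if moreover `F` is total and the `A`-complete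
parametrization is by total (and functional) morphisms, then every `g : B ⟶ B` has a
total quasi-fixed point. -/
theorem total_fixed_point [GsNormalizedCat C] {T C0 B : C} (β : IntrinsicBS C T C0 B)
    {A : C} (F : C0 ⊗ C0 ⟶ B) (hFtotal : GsTotal F)
    (hF : ∀ f : A ⊗ C0 ⟶ B, ∃ cf : A ⟶ C0, GsFunctional cf ∧ GsTotal cf ∧
      Imitates β.brel (β.map ((cf ▷ C0) ≫ F)) (β.map f))
    (g : B ⟶ B) : ∃ b : A ⟶ B, GsTotal b ∧ β.QuasiFixed b g := by
  classical
  -- the diagonal morphism `f(a, x) = g (F (x, x))`, ignoring the first slot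
  set pr : A ⊗ C0 ⟶ C0 := (GSCat.discard A ▷ C0) ≫ (λ_ C0).hom with hpr
  set dd : C0 ⟶ B := GSCat.copy C0 ≫ F ≫ g with hdd
  obtain ⟨c, hcf, hct, him⟩ := hF (pr ≫ dd)
  have hct' : c ≫ GSCat.discard C0 = GSCat.discard A := hct
  have hFtotal' : F ≫ GSCat.discard B = GSCat.discard (C0 ⊗ C0) := hFtotal
  refine ⟨c ≫ (GSCat.copy C0 ≫ F), ?_, ?_⟩
  · -- totality
    show (c ≫ (GSCat.copy C0 ≫ F)) ≫ GSCat.discard B = GSCat.discard A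
    rw [Category.assoc, Category.assoc, hFtotal', copy_discard, hct']
  · -- quasi-fixedness
    intro a hne
    obtain ⟨x₀, hc⟩ := functional_total_singleton β hcf hct a
    have hx₀ : x₀ ∈ β.map c a := by rw [hc]; rfl
    have hassoc : (c ≫ (GSCat.copy C0 ≫ F)) ≫ g = c ≫ dd := by
      rw [hdd]; simp only [Category.assoc]
    have hbg : β.map ((c ≫ (GSCat.copy C0 ≫ F)) ≫ g) a = β.map dd x₀ := by
      rw [hassoc]; ext y
      rw [mem_map_comp, hc]
      simp
    -- on points of `mul a x₀` the diagonal morphism evaluates like `dd x₀`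
    have hfz : ∀ z ∈ β.mul A C0 a x₀, β.map (pr ≫ dd) z = β.map dd x₀ := by
      intro z hz; ext y
      rw [mem_map_comp]
      constructor
      · rintro ⟨w, hw, hy⟩
        rwa [projL_mem β hz hw] at hy
      · intro hy
        obtain ⟨w₀, hw₀⟩ := total_beh β (projL_total A C0) z
        have hwx : w₀ = x₀ := projL_mem β hz hw₀
        exact ⟨w₀, hw₀, by rw [hwx]; exact hy⟩
    -- the parametrized morphism's behavior on such points lands in the behavior of `b`
    have hsubν : ∀ z ∈ β.mul A C0 a x₀, ∀ v ∈ β.map ((c ▷ C0) ≫ F) z,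
        v ∈ β.map (c ≫ (GSCat.copy C0 ≫ F)) a := by
      intro z hz v hv
      rw [mem_map_comp] at hv
      obtain ⟨q, hq, hvF⟩ := hv
      rw [← tensorHom_id] at hq
      obtain ⟨a', ha', x', hx', hq'⟩ := (β.mul_natural c (𝟙 C0) a x₀ q).mpr ⟨z, hz, hq⟩
      rw [hc] at ha'
      rw [β.map_id] at hx'
      have ha'' : x₀ = a' := Eq.symm ha'
      have hx'' : x₀ = x' := Eq.symm hx'
      subst ha''; subst hx''
      rw [mem_map_comp]
      refine ⟨x₀, hx₀, ?_⟩
      rw [mem_map_comp]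
      exact ⟨q, by rw [β.map_copy]; exact hq', hvF⟩
    constructor
    · -- enhancement
      obtain ⟨z₀, hz₀⟩ := mul_nonempty β a x₀
      have key : β.map ((c ≫ (GSCat.copy C0 ≫ F)) ≫ g) a = β.map (pr ≫ dd) z₀ :=
        hbg.trans (hfz z₀ hz₀).symm
      have hne' : (β.map (pr ≫ dd) z₀).Nonempty := key ▸ hne
      obtain ⟨⟨e, he⟩, -⟩ := him z₀ hne'
      rw [key]
      exact ⟨fun u => ⟨(e u).1, hsubν z₀ hz₀ _ (e u).2⟩, fun u => he u⟩
    · -- degradation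
      have hdeg : ∀ v ∈ β.map (c ≫ (GSCat.copy C0 ≫ F)) a,
          ∃ y, y ∈ β.map ((c ≫ (GSCat.copy C0 ≫ F)) ≫ g) a ∧ β.brel v y := by
        intro v hv
        rw [mem_map_comp] at hv
        obtain ⟨x, hx, hv⟩ := hv
        rw [hc] at hx
        have hx' : x₀ = x := Eq.symm hx
        subst hx'
        rw [mem_map_comp] at hv
        obtain ⟨p, hp, hvF⟩ := hv
        rw [β.map_copy] at hp
        obtain ⟨z, hz, hpz⟩ := (β.mul_natural c (𝟙 C0) a x₀ p).mp
          ⟨x₀, hx₀, x₀, by rw [β.map_id]; rfl, hp⟩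
        rw [tensorHom_id] at hpz
        have hne'' : (β.map (pr ≫ dd) z).Nonempty := by
          rw [hfz z hz, ← hbg]; exact hne
        obtain ⟨-, ⟨d, hd⟩⟩ := him z hne''
        have hvν : v ∈ β.map ((c ▷ C0) ≫ F) z := by
          rw [mem_map_comp]; exact ⟨p, hpz, hvF⟩
        obtain ⟨w, hw, hbw⟩ : ∃ w, w ∈ β.map (pr ≫ dd) z ∧ β.brel v w :=
          ⟨(d ⟨v, hvν⟩).1, (d ⟨v, hvν⟩).2, hd ⟨v, hvν⟩⟩
        rw [hfz z hz, ← hbg] at hw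
        exact ⟨w, hw, hbw⟩
      choose dfun hmem hrel using hdeg
      exact ⟨fun v => ⟨dfun v.1 v.2, hmem v.1 v.2⟩, fun v => hrel v.1 v.2⟩
end
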